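/- If G is a graph on n vertices with minimum degree δ = δ(G), then d_{n−δ−1}(G) = C(n, δ+1) − |{N[v] : deg(v) = δ}|, where the set of closed neighborhoods of minimum-degree vertices is counted without multiplicity. -/
import Mathlib


open Finset

/-- The closed neighborhood of a vertex as a `Finset`. -/
def closedNbhd {V : Type*} [Fintype V] [DecidableEq V] (G : SimpleGraph V)
    [DecidableRel G.Adj] (v : V) : Finset V :=
  insert v (G.neighborFinset v)

/-- The number of dominating sets of size `k`. -/
def domCount {V : Type*} [Fintype V] [DecidableEq V] (G : SimpleGraph V)
    [DecidableRel G.Adj] (k : ℕ) : ℕ :=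
  ((univ.powersetCard k).filter (fun S : Finset V => ∀ v : V, ∃ u ∈ S, u ∈ closedNbhd G v)).card

lemma card_closedNbhd {V : Type*} [Fintype V] [DecidableEq V] (G : SimpleGraph V)
    [DecidableRel G.Adj] (v : V) : (closedNbhd G v).card = G.degree v + 1 := by
  rw [closedNbhd, card_insert_of_notMem (by simp), SimpleGraph.card_neighborFinset_eq_degree]

/-- `d_{n-δ-1}(G) = C(n, δ+1) - |{N[v] : deg v = δ}|` where the set of closed
neighborhoods of minimum-degree vertices is counted without multiplicity. -/
theorem domCount_top_deltaPlusOne {V : Type*} [Fintype V] [DecidableEq V] [Nonempty V]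
    (G : SimpleGraph V) [DecidableRel G.Adj] :
    domCount G (Fintype.card V - G.minDegree - 1)
      = (Fintype.card V).choose (G.minDegree + 1)
        - ((univ.filter (fun v : V => G.degree v = G.minDegree)).image (closedNbhd G)).card := by
  classical
  set n := Fintype.card V with hn
  set δ := G.minDegree with hδ
  have hδn : δ + 1 ≤ n := by
    obtain ⟨v0⟩ := (inferInstance : Nonempty V)
    have h1 := G.minDegree_le_degree v0
    have h2 := G.degree_lt_card_verts v0
    omega
  set P := fun S : Finset V => ∀ v : V, ∃ u ∈ S, u ∈ closedNbhd G v with hP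
  set B := (univ.powersetCard (n - δ - 1)).filter (fun S => ¬ P S) with hB
  have hsplit : domCount G (n - δ - 1) + B.card = n.choose (δ + 1) := by
    rw [domCount, hB, Finset.card_filter_add_card_filter_not,
      Finset.card_powersetCard, card_univ]
    have : n - δ - 1 = n - (δ + 1) := by omega
    rw [this, Nat.choose_symm hδn]
  have himg : B.image compl = (univ.filter (fun v : V => G.degree v = δ)).image (closedNbhd G) := by
    ext T
    simp only [mem_image, hB, mem_filter, mem_powersetCard, mem_univ, true_and, subset_univ]
    constructor
    · rintro ⟨S, ⟨hcard, hdom⟩, rfl⟩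
      simp only [hP, not_forall, not_exists, not_and] at hdom
      obtain ⟨v, hv⟩ := hdom
      have hsub : closedNbhd G v ⊆ Sᶜ := by
        intro u hu
        simp only [mem_compl]
        intro huS
        exact hv u huS hu
      have hcc : Sᶜ.card = δ + 1 := by
        rw [card_compl, hcard]; omega
      have hge : δ + 1 ≤ (closedNbhd G v).card := by
        rw [card_closedNbhd]
        have := G.minDegree_le_degree v
        omega
      have heq : closedNbhd G v = Sᶜ :=
        Finset.eq_of_subset_of_card_le hsub (by omega)
      have hle := card_le_card hsub
      refine ⟨v, ?_, heq⟩
      have := card_closedNbhd G v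
      omega
    · rintro ⟨v, hdeg, rfl⟩
      refine ⟨(closedNbhd G v)ᶜ, ⟨?_, ?_⟩, compl_compl _⟩
      · rw [card_compl, card_closedNbhd, hdeg, ← hn]; omega
      · simp only [hP, not_forall, not_exists, not_and]
        exact ⟨v, fun u hu => by simpa using hu⟩
  have hcardB : B.card = ((univ.filter (fun v : V => G.degree v = δ)).image (closedNbhd G)).card := by
    rw [← himg, card_image_of_injective _ compl_injective]
  omega
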